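/- arXiv:1508.03438 — 4 statements merged into one kernel-verified Lean document; each statement's English description precedes it below -/
import Mathlib

section
/- Let H(t,ξ) be the Zaremba Green function of the lower half-plane. For every real t₁ < 0 and every complex ξ with ξ ≠ t₁, the one-sided normal derivative of H at t = t₁ from the lower half-plane, namely lim_{h→0⁻} (H(t₁ + i h, ξ) − H(t₁, ξ))/h, exists and equals 0 (the homogeneous Neumann condition on the negative real axis). -/
open Complex Real

/-- The branch angle in [-π, π): equals `Complex.arg` except that angle π is mapped to -π. -/
noncomputable def branchAngle (w : ℂ) : ℝ :=
  if Complex.arg w = Real.pi then -Real.pi else Complex.arg w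

/-- Square root branch √w = √ρ e^{iθ/2} with θ ∈ [-π, π), and √0 = 0. -/
noncomputable def zsqrt (w : ℂ) : ℂ :=
  (Real.sqrt (‖w‖) : ℂ) * Complex.exp (Complex.I * (branchAngle w / 2))

lemma branchAngle_lb (w : ℂ) : -Real.pi ≤ branchAngle w := by
  unfold branchAngle; split_ifs with h
  · exact le_refl _
  · exact (Complex.neg_pi_lt_arg w).le

lemma branchAngle_ub (w : ℂ) : branchAngle w < Real.pi := by
  unfold branchAngle; split_ifs with h
  · linarith [Real.pi_pos]
  · exact lt_of_le_of_ne (Complex.arg_le_pi w) h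

lemma zsqrt_re (w : ℂ) :
    (zsqrt w).re = Real.sqrt (‖w‖) * Real.cos (branchAngle w / 2) := by
  simp [zsqrt, Complex.mul_re, Complex.exp_re, Complex.exp_im, Complex.mul_im]

lemma zsqrt_im (w : ℂ) :
    (zsqrt w).im = Real.sqrt (‖w‖) * Real.sin (branchAngle w / 2) := by
  simp [zsqrt, Complex.mul_re, Complex.exp_re, Complex.exp_im, Complex.mul_im]

lemma zsqrt_sq (w : ℂ) : zsqrt w ^ 2 = w := by
  rw [zsqrt, mul_pow, ← Complex.ofReal_pow, Real.sq_sqrt (norm_nonneg w)]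
  have h2 : (Complex.exp (Complex.I * (branchAngle w / 2))) ^ 2
      = Complex.exp ((branchAngle w : ℂ) * Complex.I) := by
    rw [sq, ← Complex.exp_add]; ring_nf
  rw [h2]
  have : Complex.exp ((branchAngle w : ℂ) * Complex.I)
      = Complex.exp ((Complex.arg w : ℂ) * Complex.I) := by
    unfold branchAngle; split_ifs with h
    · rw [h]
      push_cast
      rw [neg_mul, Complex.exp_neg, Complex.exp_pi_mul_I]
      norm_num
    · rfl
  rw [this, Complex.norm_mul_exp_arg_mul_I]

lemma zsqrt_sign {w : ℂ} (hw : w ≠ 0) :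
    0 < (zsqrt w).re ∨ ((zsqrt w).re = 0 ∧ (zsqrt w).im ≤ 0) := by
  have hρ : 0 < Real.sqrt (‖w‖) :=
    Real.sqrt_pos.mpr (norm_pos_iff.mpr hw)
  have hlb := branchAngle_lb w
  have hub := branchAngle_ub w
  rcases eq_or_lt_of_le hlb with heq | hlt
  · right
    constructor
    · rw [zsqrt_re, ← heq]
      have : (-Real.pi) / 2 = -(Real.pi/2) := by ring
      rw [this, Real.cos_neg, Real.cos_pi_div_two, mul_zero]
    · rw [zsqrt_im, ← heq]
      have : (-Real.pi) / 2 = -(Real.pi/2) := by ring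
      rw [this, Real.sin_neg, Real.sin_pi_div_two]
      nlinarith
  · left
    rw [zsqrt_re]
    have hc : 0 < Real.cos (branchAngle w / 2) := by
      apply Real.cos_pos_of_mem_Ioo
      constructor <;> [linarith; linarith]
    positivity

lemma zsqrt_unique {w u : ℂ} (hw : w ≠ 0) (h2 : u ^ 2 = w)
    (hs : 0 < u.re ∨ (u.re = 0 ∧ u.im ≤ 0)) : u = zsqrt w := by
  have hq2 := zsqrt_sq w
  have hmul : (u - zsqrt w) * (u + zsqrt w) = 0 := by
    have : u ^ 2 - zsqrt w ^ 2 = 0 := by rw [h2, hq2]; ring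
    linear_combination this
  rcases mul_eq_zero.mp hmul with h | h
  · exact sub_eq_zero.mp h
  · exfalso
    have hu : u = -zsqrt w := by linear_combination h
    have hqs := zsqrt_sign hw
    have hq0 : zsqrt w ≠ 0 := by
      intro h0; apply hw; rw [← hq2, h0]; ring
    rw [hu] at hs
    simp only [Complex.neg_re, Complex.neg_im] at hs
    rcases hs with h1 | ⟨h1, h1'⟩ <;> rcases hqs with h3 | ⟨h3, h3'⟩
    · linarith
    · linarith
    · linarith
    · apply hq0
      apply Complex.ext <;> simp <;> linarith

lemma zsqrt_conj {w : ℂ} (h : Complex.arg w ≠ Real.pi) :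
    zsqrt ((starRingEnd ℂ) w) = (starRingEnd ℂ) (zsqrt w) := by
  have harg : Complex.arg ((starRingEnd ℂ) w) = -Complex.arg w := by
    rw [Complex.arg_conj]; simp [h]
  have hb : branchAngle ((starRingEnd ℂ) w) = -(branchAngle w) := by
    unfold branchAngle
    rw [harg]
    have h1 : -Complex.arg w ≠ Real.pi := by
      intro hc
      have h2 := Complex.neg_pi_lt_arg w
      have : Complex.arg w = -Real.pi := by linarith
      linarith
    simp [h, h1]
  rw [zsqrt, zsqrt, hb, map_mul]
  rw [Complex.norm_conj]
  congr 1
  · simp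
  · rw [← Complex.exp_conj]
    congr 1
    rw [map_mul, Complex.conj_I, map_div₀, Complex.conj_ofReal, map_ofNat]
    push_cast
    ring

lemma zsqrt_re_of_arg_pi {w : ℂ} (h : Complex.arg w = Real.pi) : (zsqrt w).re = 0 := by
  rw [zsqrt_re]
  unfold branchAngle
  rw [if_pos h]
  have : (-Real.pi) / 2 = -(Real.pi/2) := by ring
  rw [this, Real.cos_neg, Real.cos_pi_div_two, mul_zero]

noncomputable def Vb (t₁ h : ℝ) : ℂ :=
  Complex.exp ((1/2 : ℂ) * Complex.log (-((t₁ : ℂ) + Complex.I * h)))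

lemma base_re (t₁ h : ℝ) : (-((t₁ : ℂ) + Complex.I * h)).re = -t₁ := by simp
lemma base_im (t₁ h : ℝ) : (-((t₁ : ℂ) + Complex.I * h)).im = -h := by simp

lemma base_ne_zero {t₁ : ℝ} (ht : t₁ < 0) (h : ℝ) : -((t₁ : ℂ) + Complex.I * h) ≠ 0 := by
  intro hc
  have := congrArg Complex.re hc
  rw [base_re] at this
  simp at this
  linarith

lemma Vb_sq {t₁ : ℝ} (ht : t₁ < 0) (h : ℝ) :
    (Vb t₁ h) ^ 2 = -((t₁ : ℂ) + Complex.I * h) := by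
  rw [Vb, sq, ← Complex.exp_add]
  have : (1/2 : ℂ) * Complex.log (-((t₁ : ℂ) + Complex.I * h))
      + (1/2 : ℂ) * Complex.log (-((t₁ : ℂ) + Complex.I * h))
      = Complex.log (-((t₁ : ℂ) + Complex.I * h)) := by ring
  rw [this, Complex.exp_log (base_ne_zero ht h)]

lemma Vb_zero {t₁ : ℝ} (ht : t₁ < 0) : Vb t₁ 0 = (Real.sqrt (-t₁) : ℂ) := by
  have h1 : -((t₁ : ℂ) + Complex.I * (0:ℝ)) = ((-t₁ : ℝ) : ℂ) := by push_cast; ring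
  rw [Vb, h1, ← Complex.ofReal_log (by linarith : (0:ℝ) ≤ -t₁)]
  have h2 : (1/2 : ℂ) * ((Real.log (-t₁) : ℝ) : ℂ) = ((Real.log (-t₁) / 2 : ℝ) : ℂ) := by
    push_cast; ring
  rw [h2, ← Complex.ofReal_exp]
  congr 1
  rw [← Real.log_sqrt (by linarith : (0:ℝ) ≤ -t₁)]
  exact Real.exp_log (Real.sqrt_pos.mpr (by linarith))

lemma Vb_re_pos {t₁ : ℝ} (ht : t₁ < 0) (h : ℝ) : 0 < (Vb t₁ h).re := by
  set z := -((t₁ : ℂ) + Complex.I * h) with hz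
  have hzre : 0 < z.re := by rw [hz, base_re]; linarith
  have harg : |Complex.arg z| < Real.pi / 2 :=
    Complex.abs_arg_lt_pi_div_two_iff.mpr (Or.inl hzre)
  rw [Vb, Complex.exp_re]
  have him : ((1/2 : ℂ) * Complex.log z).im = Complex.arg z / 2 := by
    simp [Complex.mul_im, Complex.log_im]
    ring
  rw [him]
  have : 0 < Real.cos (Complex.arg z / 2) := by
    apply Real.cos_pos_of_mem_Ioo
    constructor
    · have := abs_lt.mp harg; linarith [this.1]
    · have := abs_lt.mp harg; linarith [this.2]
  positivity

lemma Vb_im_nonneg {t₁ : ℝ} (ht : t₁ < 0) {h : ℝ} (hh : h ≤ 0) : 0 ≤ (Vb t₁ h).im := by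
  set z := -((t₁ : ℂ) + Complex.I * h) with hz
  have hzre : 0 < z.re := by rw [hz, base_re]; linarith
  have harg1 : |Complex.arg z| < Real.pi / 2 :=
    Complex.abs_arg_lt_pi_div_two_iff.mpr (Or.inl hzre)
  have harg0 : 0 ≤ Complex.arg z := by
    rw [Complex.arg_nonneg_iff, hz, base_im]; linarith
  rw [Vb, Complex.exp_im]
  have him : ((1/2 : ℂ) * Complex.log z).im = Complex.arg z / 2 := by
    simp [Complex.mul_im, Complex.log_im]
    ring
  rw [him]
  have : 0 ≤ Real.sin (Complex.arg z / 2) := by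
    apply Real.sin_nonneg_of_nonneg_of_le_pi
    · linarith
    · have := abs_lt.mp harg1
      linarith [this.2, Real.pi_pos]
  positivity

lemma zsqrt_eq_Vb {t₁ : ℝ} (ht : t₁ < 0) {h : ℝ} (hh : h ≤ 0) :
    zsqrt ((t₁ : ℂ) + Complex.I * h) = -Complex.I * Vb t₁ h := by
  symm
  apply zsqrt_unique
  · intro hc
    have := base_ne_zero ht h
    rw [hc] at this
    simp at this
  · have := Vb_sq ht h
    have h2 : (-Complex.I * Vb t₁ h) ^ 2 = -((Vb t₁ h) ^ 2) := by
      rw [mul_pow, neg_pow, Complex.I_sq]; ring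
    rw [h2, this]; ring
  · have hre : (-Complex.I * Vb t₁ h).re = (Vb t₁ h).im := by
      simp [Complex.mul_re]
    have him : (-Complex.I * Vb t₁ h).im = -(Vb t₁ h).re := by
      simp [Complex.mul_im]
    rcases lt_or_eq_of_le (Vb_im_nonneg ht hh) with h1 | h1
    · left; rw [hre]; exact h1
    · right
      constructor
      · rw [hre, ← h1]
      · rw [him]; linarith [Vb_re_pos ht h]

lemma hasDerivAt_coord (t₁ : ℝ) :
    HasDerivAt (fun h : ℝ => (t₁ : ℂ) + Complex.I * h) Complex.I 0 := by
  have h1 : HasDerivAt (fun h : ℝ => (h : ℂ)) 1 0 := by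
    simpa using (hasDerivAt_id (0:ℝ)).ofReal_comp
  simpa using (h1.const_mul Complex.I).const_add (t₁ : ℂ)

lemma hasDerivAt_Vb {t₁ : ℝ} (ht : t₁ < 0) :
    HasDerivAt (Vb t₁) (Complex.I * ((-1 / (2 * Real.sqrt (-t₁)) : ℝ) : ℂ)) 0 := by
  set s := Real.sqrt (-t₁) with hs
  have hspos : 0 < s := Real.sqrt_pos.mpr (by linarith)
  have hs2 : (s : ℝ) ^ 2 = -t₁ := Real.sq_sqrt (by linarith)
  have hw : HasDerivAt (fun h : ℝ => -((t₁ : ℂ) + Complex.I * h)) (-Complex.I) 0 :=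
    (hasDerivAt_coord t₁).neg
  have hbase0 : -((t₁ : ℂ) + Complex.I * (0:ℝ)) = ((-t₁ : ℝ) : ℂ) := by push_cast; ring
  have hslit : ((-t₁ : ℝ) : ℂ) ∈ Complex.slitPlane := by
    rw [Complex.mem_slitPlane_iff]
    left; simp; linarith
  have hlogat : HasDerivAt Complex.log ((((-t₁ : ℝ) : ℂ))⁻¹)
      ((fun h : ℝ => -((t₁ : ℂ) + Complex.I * h)) 0) := by
    simp only []
    rw [show -((t₁ : ℂ) + Complex.I * ((0:ℝ):ℂ)) = ((-t₁ : ℝ) : ℂ) by push_cast; ring]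
    exact (Complex.hasStrictDerivAt_log hslit).hasDerivAt
  have hlog := hlogat.comp 0 hw
  have hmul := hlog.const_mul (1/2 : ℂ)
  have hexpat : HasDerivAt Complex.exp
      (Complex.exp ((fun h : ℝ => (1/2:ℂ) * Complex.log (-((t₁ : ℂ) + Complex.I * h))) 0))
      ((fun h : ℝ => (1/2:ℂ) * Complex.log (-((t₁ : ℂ) + Complex.I * h))) 0) :=
    Complex.hasDerivAt_exp _
  have hV := hexpat.comp 0 hmul
  have hV0 : Complex.exp ((fun h : ℝ => (1/2:ℂ) * Complex.log (-((t₁ : ℂ) + Complex.I * h))) 0)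
      = (s : ℂ) := Vb_zero ht
  rw [hV0] at hV
  have : (s : ℂ) * ((1/2 : ℂ) * ((((-t₁ : ℝ) : ℂ))⁻¹ * -Complex.I))
      = Complex.I * ((-1 / (2 * s) : ℝ) : ℂ) := by
    have hsc : ((s:ℝ):ℂ) ≠ 0 := by
      simp only [ne_eq, Complex.ofReal_eq_zero]; linarith
    have hr : ((-t₁ : ℝ) : ℂ) = ((s:ℝ):ℂ) ^ 2 := by
      rw [← hs2]; push_cast; ring
    rw [hr]
    push_cast
    field_simp
  rw [this] at hV
  exact hV

lemma logabs_deriv {f : ℝ → ℂ} {f' : ℂ} (hf : HasDerivAt f f' 0) (h0 : f 0 ≠ 0) :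
    HasDerivAt (fun h => Real.log (‖f h‖))
      ((f' * (starRingEnd ℂ) (f 0)).re / Complex.normSq (f 0)) 0 := by
  have hre : HasDerivAt (fun h => (f h).re) f'.re 0 :=
    Complex.reCLM.hasFDerivAt.comp_hasDerivAt 0 hf
  have him : HasDerivAt (fun h => (f h).im) f'.im 0 :=
    Complex.imCLM.hasFDerivAt.comp_hasDerivAt 0 hf
  have hnsq : HasDerivAt (fun h => Complex.normSq (f h))
      (2 * (f' * (starRingEnd ℂ) (f 0)).re) 0 := by
    have h1 : HasDerivAt (fun h => (f h).re * (f h).re + (f h).im * (f h).im) _ 0 :=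
      (hre.mul hre).add (him.mul him)
    have h2 : (fun h => (f h).re * (f h).re + (f h).im * (f h).im)
        = fun h => Complex.normSq (f h) := by
      funext h; rw [Complex.normSq_apply]
    rw [h2] at h1
    convert h1 using 1
    simp [Complex.mul_re, Complex.normSq_apply]
    ring
  have hne : Complex.normSq (f 0) ≠ 0 := by
    simpa [Complex.normSq_eq_norm_sq, pow_eq_zero_iff] using
      (Complex.normSq_pos.mpr h0).ne'
  have hlog : HasDerivAt (fun h => Real.log (Complex.normSq (f h)))
      ((Complex.normSq (f 0))⁻¹ * (2 * (f' * (starRingEnd ℂ) (f 0)).re)) 0 :=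
    by have := (Real.hasDerivAt_log hne).comp 0 hnsq; exact this
  have heq : (fun h => Real.log (‖f h‖))
      = fun h => Real.log (Complex.normSq (f h)) / 2 := by
    funext h
    rw [Complex.norm_def, Real.log_sqrt (Complex.normSq_nonneg _)]
  rw [heq]
  have := hlog.div_const 2
  exact this.congr_deriv (by ring)

/-- The Zaremba Green function of the lower half-plane. -/
noncomputable def ZH (t ξ : ℂ) : ℝ :=
  -(1 / (2 * Real.pi)) *
    (Real.log (‖t - ξ‖) + Real.log (‖t - (starRingEnd ℂ) ξ‖)
      - 2 * Real.log (‖zsqrt t + zsqrt ξ‖)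
      - 2 * Real.log (‖zsqrt t - zsqrt ((starRingEnd ℂ) ξ)‖))

/-- For every real t₁ < 0 and complex ξ ≠ t₁, the one-sided normal derivative
of H at t = t₁ from the lower half-plane exists and equals 0 (homogeneous Neumann condition
on the negative real axis). -/
theorem zaremba_green_neumann (t₁ : ℝ) (ht : t₁ < 0) (ξ : ℂ) (hξ : ξ ≠ (t₁ : ℂ)) :
    Filter.Tendsto
      (fun h : ℝ => (ZH ((t₁ : ℂ) + Complex.I * h) ξ - ZH (t₁ : ℂ) ξ) / h)
      (nhdsWithin 0 (Set.Iio 0)) (nhds 0) := by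
  have hπ : (0:ℝ) < Real.pi := Real.pi_pos
  set s := Real.sqrt (-t₁) with hsdef
  have hspos : 0 < s := Real.sqrt_pos.mpr (by linarith)
  have hs2 : s ^ 2 = -t₁ := Real.sq_sqrt (by linarith)
  set q := zsqrt ξ with hqdef
  set p := zsqrt ((starRingEnd ℂ) ξ) with hpdef
  set a0 : ℂ := (t₁ : ℂ) - ξ with ha0def
  set C0 : ℂ := -Complex.I * (s : ℂ) + q with hC0def
  set D0 : ℂ := -Complex.I * (s : ℂ) - p with hD0def
  set d : ℝ := -1 / (2 * s) with hddef
  set c : ℝ := -(1 / (2 * Real.pi)) with hcdef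
  -- nonvanishing
  have ha0 : a0 ≠ 0 := sub_ne_zero.mpr (Ne.symm hξ)
  have ha0c : (starRingEnd ℂ) a0 ≠ 0 := by
    simpa using ha0
  have hC0 : C0 ≠ 0 := by
    intro h
    apply hξ
    have hq' : q = Complex.I * (s : ℂ) := by
      rw [hC0def] at h; linear_combination h
    have hsq := zsqrt_sq ξ
    rw [← hqdef, hq'] at hsq
    rw [← hsq, mul_pow, Complex.I_sq]
    have : ((s : ℂ)) ^ 2 = ((-t₁ : ℝ) : ℂ) := by
      rw [← hs2]; push_cast; ring
    rw [this]; push_cast; ring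
  have hD0 : D0 ≠ 0 := by
    intro h
    apply hξ
    have hp' : p = -(Complex.I * (s : ℂ)) := by
      rw [hD0def] at h; linear_combination -h
    have hsq := zsqrt_sq ((starRingEnd ℂ) ξ)
    rw [← hpdef, hp'] at hsq
    have hconj : (starRingEnd ℂ) ξ = (t₁ : ℂ) := by
      rw [← hsq, neg_pow, mul_pow, Complex.I_sq]
      have : ((s : ℂ)) ^ 2 = ((-t₁ : ℝ) : ℂ) := by
        rw [← hs2]; push_cast; ring
      rw [this]; push_cast; ring
    have := congrArg (starRingEnd ℂ) hconj
    rwa [Complex.conj_conj, Complex.conj_ofReal] at this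
  -- derivative building blocks
  have hcoord := hasDerivAt_coord t₁
  have hf1 : HasDerivAt (fun h : ℝ => ((t₁ : ℂ) + Complex.I * h) - ξ) Complex.I 0 :=
    hcoord.sub_const ξ
  have hf2 : HasDerivAt (fun h : ℝ => ((t₁ : ℂ) + Complex.I * h) - (starRingEnd ℂ) ξ)
      Complex.I 0 := hcoord.sub_const _
  have hVb := hasDerivAt_Vb ht
  have he : -Complex.I * (Complex.I * ((d : ℝ) : ℂ)) = ((d : ℝ) : ℂ) := by
    rw [← mul_assoc, neg_mul, Complex.I_mul_I, neg_neg, one_mul]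
  have hf3 : HasDerivAt (fun h : ℝ => -Complex.I * Vb t₁ h + q) ((d : ℝ) : ℂ) 0 := by
    have := (hVb.const_mul (-Complex.I)).add_const q
    rw [← hsdef, ← hddef] at this
    rwa [he] at this
  have hf4 : HasDerivAt (fun h : ℝ => -Complex.I * Vb t₁ h - p) ((d : ℝ) : ℂ) 0 := by
    have := (hVb.const_mul (-Complex.I)).sub_const p
    rw [← hsdef, ← hddef] at this
    rwa [he] at this
  -- values at 0
  have e1 : ((t₁ : ℂ) + Complex.I * ((0:ℝ) : ℂ)) - ξ = a0 := by
    rw [ha0def]; push_cast; ring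
  have e2 : ((t₁ : ℂ) + Complex.I * ((0:ℝ) : ℂ)) - (starRingEnd ℂ) ξ = (starRingEnd ℂ) a0 := by
    rw [ha0def, map_sub, Complex.conj_ofReal]; push_cast; ring
  have e3 : -Complex.I * Vb t₁ 0 + q = C0 := by rw [Vb_zero ht, hC0def, hsdef]
  have e4 : -Complex.I * Vb t₁ 0 - p = D0 := by rw [Vb_zero ht, hD0def, hsdef]
  -- the log-abs derivatives
  have hL1 := logabs_deriv hf1 (by simpa only [e1] using ha0)
  simp only [e1] at hL1
  have hL2 := logabs_deriv hf2 (by simpa only [e2] using ha0c)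
  simp only [e2] at hL2
  have hL3 := logabs_deriv hf3 (by simpa only [e3] using hC0)
  simp only [e3] at hL3
  have hL4 := logabs_deriv hf4 (by simpa only [e4] using hD0)
  simp only [e4] at hL4
  -- assemble G
  have hGd := (((hL1.add hL2).sub (hL3.const_mul 2)).sub (hL4.const_mul 2)).const_mul c
  -- the total derivative is zero
  have hnC : Complex.normSq C0 ≠ 0 := by
    simpa [Complex.normSq_eq_zero] using hC0
  have hnD : Complex.normSq D0 ≠ 0 := by
    simpa [Complex.normSq_eq_zero] using hD0
  have hC0re : C0.re = q.re := by
    rw [hC0def]; simp [Complex.mul_re]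
  have hD0re : D0.re = -p.re := by
    rw [hD0def]; simp [Complex.mul_re]
  have key : q.re * Complex.normSq D0 = p.re * Complex.normSq C0 := by
    by_cases hξπ : Complex.arg ξ = Real.pi
    · have hqre : q.re = 0 := zsqrt_re_of_arg_pi hξπ
      have hpre : p.re = 0 := by
        have hreal : (starRingEnd ℂ) ξ = ξ := by
          have h' := Complex.arg_eq_pi_iff.mp hξπ
          apply Complex.ext <;> simp [h'.2]
        rw [hpdef, hreal, ← hqdef, hqre]
      rw [hqre, hpre]; ring
    · have hpq : p = (starRingEnd ℂ) q := by rw [hpdef, hqdef]; exact zsqrt_conj hξπ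
      have hDc : (starRingEnd ℂ) D0 = -C0 := by
        rw [hD0def, hC0def, hpq]
        rw [map_sub, map_mul, map_neg, Complex.conj_I, Complex.conj_ofReal, Complex.conj_conj]
        ring
      have hnsq : Complex.normSq D0 = Complex.normSq C0 := by
        rw [← Complex.normSq_conj D0, hDc, Complex.normSq_neg]
      rw [hnsq, hpq, Complex.conj_re]
  have hzero : c * ((Complex.I * (starRingEnd ℂ) a0).re / Complex.normSq a0
      + (Complex.I * (starRingEnd ℂ) ((starRingEnd ℂ) a0)).re
          / Complex.normSq ((starRingEnd ℂ) a0)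
      - 2 * ((((d : ℝ) : ℂ) * (starRingEnd ℂ) C0).re / Complex.normSq C0)
      - 2 * ((((d : ℝ) : ℂ) * (starRingEnd ℂ) D0).re / Complex.normSq D0)) = 0 := by
    have h12 : (Complex.I * (starRingEnd ℂ) a0).re
        + (Complex.I * (starRingEnd ℂ) ((starRingEnd ℂ) a0)).re = 0 := by
      simp [Complex.mul_re]
    have hr3 : (((d : ℝ) : ℂ) * (starRingEnd ℂ) C0).re = d * q.re := by
      simp [Complex.mul_re, hC0re]
    have hr4 : (((d : ℝ) : ℂ) * (starRingEnd ℂ) D0).re = d * (-p.re) := by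
      simp [Complex.mul_re, hD0re]
    have hfr : d * q.re / Complex.normSq C0 = d * p.re / Complex.normSq D0 := by
      rw [div_eq_div_iff hnC hnD]
      linear_combination d * key
    rw [Complex.normSq_conj, hr3, hr4, ← add_div, h12, zero_div,
      show d * -p.re = -(d * p.re) from by ring, neg_div, ← hfr]
    ring
  rw [hzero] at hGd
  -- transfer to ZH by congruence on Iic 0
  have hFW : HasDerivWithinAt (fun h : ℝ => ZH ((t₁ : ℂ) + Complex.I * h) ξ) 0
      (Set.Iio 0) 0 := by
    apply (hGd.hasDerivWithinAt (s := Set.Iio 0)).congr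
    · intro y hy
      unfold ZH
      rw [zsqrt_eq_Vb ht (le_of_lt hy)]
      rfl
    · unfold ZH
      rw [zsqrt_eq_Vb ht (le_refl (0:ℝ))]
      rfl
  rw [hasDerivWithinAt_iff_tendsto_slope] at hFW
  have hset : Set.Iio (0:ℝ) \ {0} = Set.Iio 0 := by
    ext x; simp
  rw [hset] at hFW
  apply hFW.congr
  intro x
  rw [slope_def_field]
  have hz0 : (t₁ : ℂ) + Complex.I * ((0:ℝ) : ℂ) = (t₁ : ℂ) := by push_cast; ring
  rw [hz0, sub_zero]
end

section
/- Fix a real t₁ < 0 and a complex number z = z₁ + i z₂ with z ≠ −i√(−t₁). Then the one-sided derivative from the lower half-plane at t₂ = 0 of the function t₂ ↦ log|√(t₁ + i t₂) − z| exists and equals z₁ / ( 2 √(−t₁) ( z₁² + (√(−t₁) + z₂)² ) ). -/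
open Complex Real

lemma exp_pi_div_two_mul_I' : Complex.exp (((Real.pi/2 : ℝ) : ℂ) * Complex.I) = Complex.I := by
  rw [Complex.exp_mul_I, ← Complex.ofReal_cos, ← Complex.ofReal_sin,
    Real.cos_pi_div_two, Real.sin_pi_div_two]
  simp

lemma zsqrt_eq_exp (t₁ : ℝ) (ht : t₁ < 0) (h : ℝ) (hh : h ≤ 0) :
    zsqrt ((t₁ : ℂ) + Complex.I * h) =
      Complex.exp (Complex.log (Complex.I * ((t₁ : ℂ) + Complex.I * h)) / 2
        - Complex.I * ((Real.pi : ℂ) / 4)) := by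
  set w : ℂ := (t₁ : ℂ) + Complex.I * h with hw
  have hwre : w.re = t₁ := by simp [hw]
  have hwim : w.im = h := by simp [hw]
  have hw0 : w ≠ 0 := fun H => by rw [H] at hwre; simp at hwre; linarith
  have hIw0 : Complex.I * w ≠ 0 := mul_ne_zero Complex.I_ne_zero hw0
  have habs : 0 < ‖w‖ := norm_pos_iff.mpr hw0
  set θ : ℝ := branchAngle w with hθdef
  have hθ : -Real.pi ≤ θ ∧ θ < 0 := by
    by_cases harg : Complex.arg w = Real.pi
    · simp only [hθdef, branchAngle, harg, if_pos]
      exact ⟨le_refl _, by linarith [Real.pi_pos]⟩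
    · simp only [hθdef, branchAngle, harg, if_false]
      refine ⟨(Complex.neg_pi_lt_arg w).le, ?_⟩
      rcases lt_or_eq_of_le hh with h1 | h1
      · exact Complex.arg_neg_iff.2 (by rw [hwim]; exact h1)
      · exfalso; apply harg
        have hwt : w = (t₁ : ℂ) := by rw [hw, h1]; simp
        rw [hwt]; exact Complex.arg_ofReal_of_neg ht
  set a : ℂ := zsqrt w with ha
  set b : ℂ := Complex.exp (Complex.log (Complex.I * w) / 2
      - Complex.I * ((Real.pi : ℂ) / 4)) with hb
  have ha2 : a ^ 2 = w := by
    rw [ha, zsqrt, mul_pow, ← Complex.exp_nat_mul, ← Complex.ofReal_pow,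
      Real.sq_sqrt (norm_nonneg w)]
    have h2 : ((2:ℕ) : ℂ) * (Complex.I * ((θ : ℂ) / 2)) = (θ : ℝ) * Complex.I := by
      push_cast; ring
    rw [h2]
    by_cases harg : Complex.arg w = Real.pi
    · have hθπ : θ = -Real.pi := by simp [hθdef, branchAngle, harg]
      have hexp : Complex.exp (((-Real.pi : ℝ) : ℂ) * Complex.I) = -1 := by
        have he : ((-Real.pi : ℝ) : ℂ) * Complex.I = -(↑Real.pi * Complex.I) := by push_cast; ring
        rw [he, Complex.exp_neg, Complex.exp_pi_mul_I]
        norm_num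
      have h3 := Complex.norm_mul_exp_arg_mul_I w
      rw [harg, Complex.exp_pi_mul_I] at h3
      rw [hθπ, hexp]
      linear_combination h3
    · have hθa : θ = Complex.arg w := by simp [hθdef, branchAngle, harg]
      rw [hθa]
      exact Complex.norm_mul_exp_arg_mul_I w
  have hb2 : b ^ 2 = w := by
    rw [hb, ← Complex.exp_nat_mul]
    have h2 : ((2:ℕ) : ℂ) * (Complex.log (Complex.I * w) / 2
        - Complex.I * ((Real.pi : ℂ) / 4))
        = Complex.log (Complex.I * w) - ((Real.pi/2 : ℝ) : ℂ) * Complex.I := by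
      push_cast; ring
    rw [h2, Complex.exp_sub, Complex.exp_log hIw0, exp_pi_div_two_mul_I']
    exact mul_div_cancel_left₀ w Complex.I_ne_zero
  have haim : a.im < 0 := by
    have hrw : Complex.I * ((θ : ℂ) / 2) = ((θ/2 : ℝ) : ℂ) * Complex.I := by
      push_cast; ring
    have him : a.im = Real.sqrt (‖w‖) * Real.sin (θ/2) := by
      rw [ha, zsqrt, ← hθdef, hrw]
      simp only [Complex.mul_im, Complex.ofReal_re, Complex.ofReal_im, zero_mul, add_zero,
        Complex.exp_ofReal_mul_I_im]
    rw [him]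
    apply mul_neg_of_pos_of_neg (Real.sqrt_pos.2 habs)
    apply Real.sin_neg_of_neg_of_neg_pi_lt
    · linarith [hθ.2]
    · have := Real.pi_pos; linarith [hθ.1]
  have hbim : b.im < 0 := by
    set c : ℂ := Complex.log (Complex.I * w) / 2 - Complex.I * ((Real.pi : ℂ) / 4) with hc
    have hcim : c.im = Complex.arg (Complex.I * w) / 2 - Real.pi / 4 := by
      rw [hc]
      simp [Complex.sub_im, Complex.div_im, Complex.log_im, Complex.mul_im]
    have hIwre : (Complex.I * w).re = -h := by simp [hwim]
    have hIwim : (Complex.I * w).im = t₁ := by simp [hwre]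
    have harg1 : -(Real.pi/2) ≤ Complex.arg (Complex.I * w) := by
      have h0 : (0:ℝ) ≤ (Complex.I * w).re := by rw [hIwre]; linarith
      have := Complex.abs_arg_le_pi_div_two_iff.2 h0
      rw [abs_le] at this
      exact this.1
    have harg2 : Complex.arg (Complex.I * w) < 0 :=
      Complex.arg_neg_iff.2 (by rw [hIwim]; exact ht)
    have : b.im = Real.exp c.re * Real.sin c.im := by rw [hb]; exact Complex.exp_im c
    rw [this]
    apply mul_neg_of_pos_of_neg (Real.exp_pos _)
    apply Real.sin_neg_of_neg_of_neg_pi_lt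
    · rw [hcim]; linarith [Real.pi_pos]
    · rw [hcim]; linarith [Real.pi_pos]
  -- conclude a = b
  have hsq : (a - b) * (a + b) = 0 := by
    have : a ^ 2 - b ^ 2 = 0 := by rw [ha2, hb2]; ring
    linear_combination this
  rcases mul_eq_zero.1 hsq with h1 | h1
  · exact sub_eq_zero.1 h1
  · exfalso
    have h2 := congrArg Complex.im h1
    simp only [Complex.add_im, Complex.zero_im] at h2
    linarith

lemma zsqrt_neg_real {t₁ : ℝ} (ht : t₁ < 0) :
    zsqrt (t₁ : ℂ) = -Complex.I * (Real.sqrt (-t₁) : ℂ) := by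
  have harg : Complex.arg (t₁ : ℂ) = Real.pi := Complex.arg_ofReal_of_neg ht
  rw [zsqrt, branchAngle, harg, if_pos rfl]
  have habs : ‖(t₁ : ℂ)‖ = -t₁ := by simp [abs_of_neg ht]
  rw [habs]
  have hrw : Complex.I * (((-Real.pi : ℝ) : ℂ) / 2) = ((-(Real.pi/2) : ℝ) : ℂ) * Complex.I := by
    push_cast; ring
  rw [hrw, Complex.exp_mul_I, ← Complex.ofReal_cos, ← Complex.ofReal_sin,
    Real.cos_neg, Real.sin_neg, Real.cos_pi_div_two, Real.sin_pi_div_two]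
  push_cast
  ring

/-- For real t₁ < 0 and complex z ≠ -i√(-t₁), the one-sided derivative from
the lower half-plane at t₂ = 0 of t₂ ↦ log|√(t₁ + i t₂) − z| exists and equals
z₁ / (2 √(-t₁) (z₁² + (√(-t₁) + z₂)²)). -/
theorem log_sqrt_normal_derivative_negative_axis (t₁ : ℝ) (ht : t₁ < 0) (z : ℂ)
    (hz : z ≠ -Complex.I * (Real.sqrt (-t₁) : ℂ)) :
    Filter.Tendsto
      (fun h : ℝ =>
        (Real.log (‖zsqrt ((t₁ : ℂ) + Complex.I * h) - z‖) -
          Real.log (‖zsqrt (t₁ : ℂ) - z‖)) / h)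
      (nhdsWithin 0 (Set.Iio 0))
      (nhds (z.re / (2 * Real.sqrt (-t₁) * (z.re ^ 2 + (Real.sqrt (-t₁) + z.im) ^ 2)))) := by
  have hs : 0 < Real.sqrt (-t₁) := Real.sqrt_pos.2 (by linarith)
  set s : ℝ := Real.sqrt (-t₁) with hsdef
  have hs2 : s ^ 2 = -t₁ := Real.sq_sqrt (by linarith)
  have ht1ne : (t₁ : ℂ) ≠ 0 := by exact_mod_cast ht.ne
  set f : ℝ → ℂ := fun h => Complex.exp (Complex.log (Complex.I * ((t₁ : ℂ) + Complex.I * h)) / 2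
      - Complex.I * ((Real.pi : ℂ) / 4)) - z with hfdef
  have h00 : ((t₁ : ℂ) + Complex.I * ((0 : ℝ) : ℂ)) = (t₁ : ℂ) := by simp
  have hexp0 : Complex.exp (Complex.log (Complex.I * ((t₁ : ℂ) + Complex.I * ((0:ℝ) : ℂ))) / 2
      - Complex.I * ((Real.pi : ℂ) / 4)) = -Complex.I * (s : ℂ) := by
    rw [← zsqrt_eq_exp t₁ ht 0 le_rfl, h00, zsqrt_neg_real ht]
  have hf0 : f 0 = -Complex.I * (s : ℂ) - z := by
    rw [hfdef]; simp only; rw [hexp0]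
  have hf0ne : f 0 ≠ 0 := by
    rw [hf0]
    intro H
    exact hz (sub_eq_zero.mp H).symm
  -- derivative of f
  have d1 : HasDerivAt (fun h : ℝ => (h : ℂ)) 1 0 := by
    simpa using (hasDerivAt_id (0:ℝ)).ofReal_comp
  have d2 : HasDerivAt (fun h : ℝ => (t₁ : ℂ) + Complex.I * h) Complex.I 0 := by
    simpa using (d1.const_mul Complex.I).const_add (t₁ : ℂ)
  have d3 : HasDerivAt (fun h : ℝ => Complex.I * ((t₁ : ℂ) + Complex.I * h))
      (Complex.I * Complex.I) 0 := d2.const_mul Complex.I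
  have hmem : Complex.I * ((t₁ : ℂ) + Complex.I * ((0:ℝ) : ℂ)) ∈ Complex.slitPlane := by
    rw [Complex.mem_slitPlane_iff]
    right
    simp [h00]
    exact ht.ne
  have d4 := d3.clog_real hmem
  have d5 : HasDerivAt f
      (Complex.exp (Complex.log (Complex.I * ((t₁ : ℂ) + Complex.I * ((0:ℝ) : ℂ))) / 2
        - Complex.I * ((Real.pi : ℂ) / 4)) *
        (Complex.I * Complex.I / (Complex.I * ((t₁ : ℂ) + Complex.I * ((0:ℝ) : ℂ))) / 2)) 0 :=
    (((d4.div_const 2).sub_const (Complex.I * ((Real.pi : ℂ) / 4))).cexp).sub_const z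
  have hD : (Complex.exp (Complex.log (Complex.I * ((t₁ : ℂ) + Complex.I * ((0:ℝ) : ℂ))) / 2
        - Complex.I * ((Real.pi : ℂ) / 4)) *
        (Complex.I * Complex.I / (Complex.I * ((t₁ : ℂ) + Complex.I * ((0:ℝ) : ℂ))) / 2))
      = ((s / (2 * t₁) : ℝ) : ℂ) := by
    rw [hexp0, h00, Complex.I_mul_I]
    push_cast
    field_simp
  rw [hD] at d5
  have du : HasDerivAt (fun h : ℝ => (f h).re) (s / (2 * t₁)) 0 := by
    simpa only [Function.comp_def, Complex.reCLM_apply, Complex.ofReal_re] using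
      Complex.reCLM.hasFDerivAt.comp_hasDerivAt 0 d5
  have dv : HasDerivAt (fun h : ℝ => (f h).im) 0 0 := by
    simpa only [Function.comp_def, Complex.imCLM_apply, Complex.ofReal_im] using
      Complex.imCLM.hasFDerivAt.comp_hasDerivAt 0 d5
  have hN0pos : 0 < (f 0).re ^ 2 + (f 0).im ^ 2 := by
    have h1 := Complex.normSq_pos.2 hf0ne
    rw [Complex.normSq_apply] at h1
    nlinarith [h1]
  have dG := (((du.pow 2).add (dv.pow 2)).log hN0pos.ne').div_const 2
  set F : ℝ → ℝ := fun h => Real.log (‖zsqrt ((t₁ : ℂ) + Complex.I * h) - z‖)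
    with hFdef
  have habslog : ∀ v : ℂ, Real.log (‖v‖) = Real.log (v.re ^ 2 + v.im ^ 2) / 2 := by
    intro v
    rw [Complex.norm_def, Real.log_sqrt (Complex.normSq_nonneg v), Complex.normSq_apply,
      pow_two, pow_two]
  have hFG : ∀ y : ℝ, y ≤ 0 → F y = Real.log ((f y).re ^ 2 + (f y).im ^ 2) / 2 := by
    intro y hy
    rw [hFdef]
    simp only
    rw [← habslog (f y), hfdef]
    simp only
    rw [← zsqrt_eq_exp t₁ ht y hy]
  have hDW : HasDerivWithinAt F
      ((((2:ℕ) * (f 0).re ^ 1 * (s / (2 * t₁)) + (2:ℕ) * (f 0).im ^ 1 * 0) /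
        ((f 0).re ^ 2 + (f 0).im ^ 2)) / 2) (Set.Iio 0) 0 :=
    dG.hasDerivWithinAt.congr (fun y hy => hFG y (le_of_lt hy)) (hFG 0 le_rfl)
  have hval : (((2:ℕ) * (f 0).re ^ 1 * (s / (2 * t₁)) + (2:ℕ) * (f 0).im ^ 1 * 0) /
        ((f 0).re ^ 2 + (f 0).im ^ 2)) / 2
      = z.re / (2 * s * (z.re ^ 2 + (s + z.im) ^ 2)) := by
    have hre : (f 0).re = -z.re := by rw [hf0]; simp
    have him : (f 0).im = -s - z.im := by rw [hf0]; simp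
    have hD0 : 0 < z.re ^ 2 + (s + z.im) ^ 2 := by
      have := hN0pos
      rw [hre, him] at this
      nlinarith [this]
    rw [hre, him, show t₁ = -s ^ 2 by linarith]
    have hsne : s ≠ 0 := hs.ne'
    have hD1 : z.re ^ 2 + (s + z.im) ^ 2 ≠ 0 := hD0.ne'
    rw [pow_one, pow_one, mul_zero, add_zero,
      show (-z.re) ^ 2 + (-s - z.im) ^ 2 = z.re ^ 2 + (s + z.im) ^ 2 by ring]
    rw [div_div, div_eq_div_iff (by positivity) (by positivity)]
    push_cast
    field_simp
  rw [hval] at hDW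
  have hT := (hasDerivWithinAt_iff_tendsto_slope' (by simp : (0:ℝ) ∉ Set.Iio 0)).1 hDW
  have hfun : (fun h : ℝ =>
      (Real.log (‖zsqrt ((t₁ : ℂ) + Complex.I * h) - z‖) -
        Real.log (‖zsqrt (t₁ : ℂ) - z‖)) / h) = slope F 0 := by
    funext y
    rw [slope_def_field, hFdef]
    simp only
    rw [h00, sub_zero]
  rw [hfun]
  exact hT
end

section
/- Let H(t,ξ) be the Zaremba Green function of the lower half-plane and fix a nonzero complex ξ with Im ξ ≤ 0. Then H(t,ξ) = O(|t|^{1/2}) as t → 0 within the closed lower half-plane; i.e., there exist constants C > 0 and r > 0 such that |H(t,ξ)| ≤ C |t|^{1/2} for all t ≠ 0 with Im t ≤ 0 and |t| < r. -/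
open Complex Real

lemma abs_zsqrt (w : ℂ) : ‖zsqrt w‖ = Real.sqrt (‖w‖) := by
  simp [zsqrt, Complex.norm_exp]

lemma abs_log_le_two (y : ℝ) (hy : 1/2 ≤ y) : |Real.log y| ≤ 2 * |y - 1| := by
  have hy0 : 0 < y := by linarith
  rcases le_or_gt 1 y with h | h
  · rw [_root_.abs_of_nonneg (Real.log_nonneg h), _root_.abs_of_nonneg (by linarith : (0:ℝ) ≤ y - 1)]
    have := Real.log_le_sub_one_of_pos hy0
    linarith
  · rw [_root_.abs_of_nonpos (Real.log_nonpos hy0.le h.le), abs_of_neg (by linarith : y - 1 < 0)]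
    have h1 : Real.log (1/y) ≤ 1/y - 1 := Real.log_le_sub_one_of_pos (by positivity)
    rw [Real.log_div one_ne_zero (ne_of_gt hy0), Real.log_one] at h1
    have h2 : 1/y ≤ 2 := by rw [div_le_iff₀ hy0]; linarith
    have h3 : (1/y) * y = 1 := by field_simp
    nlinarith [mul_le_mul_of_nonneg_right h2 (by linarith : (0:ℝ) ≤ 1 - y)]

lemma log_diff_le (b x d : ℝ) (hb : 0 < b) (h : |x - b| ≤ d) (hd : 2*d ≤ b) :
    |Real.log x - Real.log b| ≤ 2 * d / b := by
  have hd0 : 0 ≤ d := le_trans (abs_nonneg _) h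
  have hab := abs_le.mp h
  have hx : 0 < x := by linarith [hab.1]
  rw [← Real.log_div (ne_of_gt hx) (ne_of_gt hb)]
  have hy : 1/2 ≤ x / b := by rw [le_div_iff₀ hb]; linarith [hab.1]
  have key := abs_log_le_two (x/b) hy
  have h2 : x/b - 1 = (x - b)/b := by field_simp
  rw [h2, abs_div, _root_.abs_of_pos hb] at key
  calc |Real.log (x/b)| ≤ 2 * (|x-b|/b) := key
    _ ≤ 2 * d / b := by rw [mul_div_assoc]; gcongr

/-- For fixed nonzero ξ with Im ξ ≤ 0, one has H(t,ξ) = O(|t|^{1/2}) as t → 0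
within the closed lower half-plane. -/
theorem zaremba_green_sqrt_bound_near_zero (ξ : ℂ) (hξ0 : ξ ≠ 0) (hξ : ξ.im ≤ 0) :
    ∃ C > (0:ℝ), ∃ r > (0:ℝ), ∀ t : ℂ, t ≠ 0 → t.im ≤ 0 → ‖t‖ < r →
      |ZH t ξ| ≤ C * Real.sqrt (‖t‖) := by
  have ha : 0 < ‖ξ‖ := norm_pos_iff.mpr hξ0
  set a := ‖ξ‖ with ha_def
  set s := Real.sqrt a with hs_def
  have hs : 0 < s := Real.sqrt_pos.mpr ha
  have hπ : 0 < Real.pi := Real.pi_pos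
  refine ⟨(1/(2*Real.pi)) * (4/a + 8/s), by positivity, min 1 (a/4), by positivity, ?_⟩
  intro t ht0 htim htr
  simp only [ZH]
  have hta : ‖t‖ < a/4 := lt_of_lt_of_le htr (min_le_right _ _)
  have ht1 : ‖t‖ < 1 := lt_of_lt_of_le htr (min_le_left _ _)
  set m := ‖t‖ with hm_def
  have hm0 : 0 ≤ m := norm_nonneg t
  set q := Real.sqrt m with hq_def
  have hq0 : 0 ≤ q := Real.sqrt_nonneg m
  have hqq : q * q = m := Real.mul_self_sqrt hm0
  have hq1 : q ≤ 1 := by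
    have := Real.sqrt_le_sqrt ht1.le
    rwa [Real.sqrt_one] at this
  have hmq : m ≤ q := by nlinarith
  have hqs : 2 * q ≤ s := by
    have h1 : q ≤ Real.sqrt (a/4) := Real.sqrt_le_sqrt hta.le
    have h2 : Real.sqrt (a/4) = s/2 := by
      rw [hs_def, Real.sqrt_div ha.le, show Real.sqrt 4 = 2 by
        rw [show (4:ℝ) = 2^2 by norm_num, Real.sqrt_sq (by norm_num : (0:ℝ) ≤ 2)]]
    rw [h2] at h1
    linarith
  have hsa : ‖zsqrt ξ‖ = s := by rw [abs_zsqrt]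
  have hsa' : ‖zsqrt ((starRingEnd ℂ) ξ)‖ = s := by
    rw [abs_zsqrt, Complex.norm_conj]
  have hqt : ‖zsqrt t‖ = q := by rw [abs_zsqrt]
  have E1 : |Real.log (‖t - ξ‖) - Real.log a| ≤ 2 * m / a := by
    refine log_diff_le a _ m ha ?_ (by linarith)
    simpa using abs_norm_sub_norm_le (t - ξ) (-ξ)
  have E2 : |Real.log (‖t - (starRingEnd ℂ) ξ‖) - Real.log a| ≤ 2 * m / a := by
    refine log_diff_le a _ m ha ?_ (by linarith)
    have := abs_norm_sub_norm_le (t - (starRingEnd ℂ) ξ) (-(starRingEnd ℂ) ξ)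
    simpa [Complex.norm_conj] using this
  have E3 : |Real.log (‖zsqrt t + zsqrt ξ‖) - Real.log s| ≤ 2 * q / s := by
    refine log_diff_le s _ q hs ?_ hqs
    have := abs_norm_sub_norm_le (zsqrt t + zsqrt ξ) (zsqrt ξ)
    simpa [hsa, hqt] using this
  have E4 : |Real.log (‖zsqrt t - zsqrt ((starRingEnd ℂ) ξ)‖) - Real.log s| ≤ 2 * q / s := by
    refine log_diff_le s _ q hs ?_ hqs
    have := abs_norm_sub_norm_le (zsqrt t - zsqrt ((starRingEnd ℂ) ξ))
      (-(zsqrt ((starRingEnd ℂ) ξ)))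
    simpa [hsa', hqt] using this
  have hloga : Real.log a = 2 * Real.log s := by
    rw [hs_def, Real.log_sqrt ha.le]; ring
  set L1 := Real.log (‖t - ξ‖)
  set L2 := Real.log (‖t - (starRingEnd ℂ) ξ‖)
  set L3 := Real.log (‖zsqrt t + zsqrt ξ‖)
  set L4 := Real.log (‖zsqrt t - zsqrt ((starRingEnd ℂ) ξ)‖)
  have hma : 2 * m / a ≤ 2 * q / a := by gcongr
  have h1 := abs_le.mp E1
  have h2 := abs_le.mp E2
  have h3 := abs_le.mp E3
  have h4 := abs_le.mp E4
  have hX : |L1 + L2 - 2*L3 - 2*L4| ≤ (4/a + 8/s) * q := by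
    have key : L1 + L2 - 2*L3 - 2*L4
        = (L1 - Real.log a) + (L2 - Real.log a) - 2*(L3 - Real.log s) - 2*(L4 - Real.log s) := by
      rw [hloga]; ring
    have hexp : (4/a + 8/s) * q = 2*(2*q/a) + 4*(2*q/s) := by ring
    rw [key, abs_le, hexp]
    constructor
    · linarith [h1.1, h2.1, h3.2, h4.2, hma]
    · linarith [h1.2, h2.2, h3.1, h4.1, hma]
  rw [abs_mul, abs_neg, _root_.abs_of_pos (by positivity : (0:ℝ) < 1/(2*Real.pi))]
  calc 1/(2*Real.pi) * |L1 + L2 - 2*L3 - 2*L4| ≤ 1/(2*Real.pi) * ((4/a + 8/s) * q) := by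
        gcongr
    _ = (1/(2*Real.pi)) * (4/a + 8/s) * q := by ring
end

section
/- Let H(t,ξ) be the Zaremba Green function of the lower half-plane and fix a complex ξ with Im ξ < 0. Then the radial derivative of H in t satisfies (∂/∂ρ) H(ρ e^{iθ}, ξ) = O(ρ^{−1/2}) as ρ → 0, uniformly in the angle: there exist constants C > 0 and r > 0 such that |(∂/∂ρ) H(ρ e^{iθ}, ξ)| ≤ C ρ^{−1/2} for all 0 < ρ < r and all θ ∈ [−π, 0] (derivatives at the endpoint angles taken one-sidedly from the lower half-plane). -/
open Complex Real

private lemma absIexp (x : ℝ) : ‖Complex.exp (Complex.I * x)‖ = 1 := by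
  rw [Complex.norm_exp]; simp

private lemma zsqrt_abs (w : ℂ) : ‖zsqrt w‖ = Real.sqrt ‖w‖ := by
  unfold zsqrt
  rw [norm_mul, Complex.norm_real, Real.norm_of_nonneg (Real.sqrt_nonneg _),
    Complex.norm_exp]
  simp

private lemma zsqrt_polar (ρ θ : ℝ) (hρ : 0 < ρ) (h1 : -Real.pi ≤ θ) (h2 : θ ≤ 0) :
    zsqrt ((ρ:ℂ) * Complex.exp (Complex.I * θ)) =
      (Real.sqrt ρ : ℂ) * Complex.exp (Complex.I * ((θ:ℂ)/2)) := by
  have hexp : Complex.exp (Complex.I * θ) = Complex.cos θ + Complex.sin θ * Complex.I := by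
    rw [mul_comm, Complex.exp_mul_I]
  have habs : ‖(ρ:ℂ) * Complex.exp (Complex.I * θ)‖ = ρ := by
    rw [norm_mul, Complex.norm_real, Real.norm_of_nonneg hρ.le, absIexp, mul_one]
  have hangle : branchAngle ((ρ:ℂ) * Complex.exp (Complex.I * θ)) = θ := by
    rcases eq_or_lt_of_le h1 with h | h
    · have hc : Complex.exp (Complex.I * θ) = -1 := by
        rw [hexp, ← h]; push_cast; simp
      have harg : Complex.arg ((ρ:ℂ) * Complex.exp (Complex.I * θ)) = Real.pi := by
        rw [hc]
        have h2' : (ρ:ℂ) * (-1) = ((-ρ : ℝ) : ℂ) := by push_cast; ring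
        rw [h2', Complex.arg_ofReal_of_neg (by linarith)]
      rw [branchAngle, harg, if_pos rfl, h]
    · have harg : Complex.arg ((ρ:ℂ) * Complex.exp (Complex.I * θ)) = θ := by
        rw [hexp, Complex.arg_real_mul _ hρ,
          Complex.arg_cos_add_sin_mul_I ⟨h, by linarith [Real.pi_pos]⟩]
      rw [branchAngle, harg, if_neg (by intro hh; linarith [Real.pi_pos, hh])]
  unfold zsqrt
  rw [habs, hangle]

private lemma quad_nonneg (x a c : ℝ) (hx : 0 ≤ x) (ha : |a| ≤ c) :
    0 ≤ x^2 + 2*a*x + c^2 := by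
  obtain ⟨hl, hu⟩ := abs_le.mp ha
  nlinarith [sq_nonneg (x - c), sq_nonneg (x + c)]

private lemma quad_lower (x a c : ℝ) (hx : 0 < x) (hxc : x ≤ c/2) (ha : |a| ≤ c) (hc : 0 < c) :
    c^2/4 ≤ x^2 + 2*a*x + c^2 := by
  obtain ⟨hl, hu⟩ := abs_le.mp ha
  nlinarith [mul_nonneg (by linarith : (0:ℝ) ≤ a + c) hx.le,
    mul_nonneg (by linarith : (0:ℝ) ≤ c/2 - x) hc.le]

private lemma quot_bound1 (x a c F : ℝ) (hx : 0 < x) (hx1 : x ≤ 1) (ha : |a| ≤ c) (hc : 0 < c)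
    (hF : c^2/4 ≤ F) : |(2*x - 2*a)/F| ≤ (8+8*c)/c^2 := by
  have hF0 : 0 < F := lt_of_lt_of_le (by positivity) hF
  rw [abs_div, _root_.abs_of_pos hF0]
  have hnum : |2*x - 2*a| ≤ 2+2*c := by
    obtain ⟨hl, hu⟩ := abs_le.mp ha
    rw [abs_le]; constructor <;> linarith
  calc |2*x-2*a|/F ≤ (2+2*c)/(c^2/4) := div_le_div₀ (by linarith) hnum (by positivity) hF
  _ = (8+8*c)/c^2 := by field_simp; ring

private lemma quot_bound2 (s t a F : ℝ) (hs : 0 < s) (hs1 : s ≤ 1) (ha : |a| ≤ t) (ht : 0 < t)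
    (hF : t^2/4 ≤ F) : |(1 + 2*a*(1/(2*s)))/F| ≤ ((4+4*t)/t^2)/s := by
  have hF0 : 0 < F := lt_of_lt_of_le (by positivity) hF
  rw [abs_div, _root_.abs_of_pos hF0]
  obtain ⟨hl, hu⟩ := abs_le.mp ha
  have hnum : |1 + 2*a*(1/(2*s))| ≤ (1 + t)/s := by
    have he : 1 + 2*a*(1/(2*s)) = (s + a)/s := by field_simp
    rw [he, abs_div, _root_.abs_of_pos hs]
    gcongr
    rw [abs_le]; constructor <;> linarith
  calc |1 + 2*a*(1/(2*s))|/F ≤ ((1+t)/s)/(t^2/4) :=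
    div_le_div₀ (by positivity) hnum (by positivity) hF
  _ = ((4+4*t)/t^2)/s := by field_simp

set_option maxHeartbeats 1000000 in
/-- For fixed ξ with Im ξ < 0, the radial derivative of H in t satisfies
(∂/∂ρ)H(ρe^{iθ},ξ) = O(ρ^{−1/2}) as ρ → 0, uniformly in the angle θ ∈ [−π,0]. -/
theorem zaremba_green_radial_derivative_bound (ξ : ℂ) (hξ : ξ.im < 0) :
    ∃ C > (0:ℝ), ∃ r > (0:ℝ), ∀ ρ θ : ℝ, 0 < ρ → ρ < r → -Real.pi ≤ θ → θ ≤ 0 →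
      ∃ d : ℝ,
        HasDerivAt (fun ρ' : ℝ => ZH ((ρ' : ℂ) * Complex.exp (Complex.I * θ)) ξ) d ρ ∧
        |d| ≤ C * ρ ^ (-(1/2) : ℝ) := by
  have hξ0 : ξ ≠ 0 := by intro h; rw [h] at hξ; simp at hξ
  set b : ℝ := ‖ξ‖ with hbdef
  have hb : 0 < b := norm_pos_iff.mpr hξ0
  set sb : ℝ := Real.sqrt b with hsbdef
  have hsb : 0 < sb := Real.sqrt_pos.mpr hb
  have hsb2 : sb^2 = b := Real.sq_sqrt hb.le
  refine ⟨(1/(2*Real.pi)) * ((8+8*b)/b^2 + 2*((4+4*sb)/b)), by positivity,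
    min 1 (b/4), by positivity, ?_⟩
  intro ρ θ hρ hρr hθ1 hθ2
  have hρ1 : ρ ≤ 1 := le_of_lt (lt_of_lt_of_le hρr (min_le_left _ _))
  have hρb : ρ ≤ b/4 := le_of_lt (lt_of_lt_of_le hρr (min_le_right _ _))
  set sρ : ℝ := Real.sqrt ρ with hsρdef
  have hsρ : 0 < sρ := Real.sqrt_pos.mpr hρ
  have hsρ2 : sρ^2 = ρ := Real.sq_sqrt hρ.le
  have hsρ1 : sρ ≤ 1 := by
    rw [hsρdef, show (1:ℝ) = Real.sqrt 1 by simp]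
    exact Real.sqrt_le_sqrt hρ1
  have hsρb : sρ ≤ sb/2 := by
    have h1 : Real.sqrt ρ ≤ Real.sqrt (b/4) := Real.sqrt_le_sqrt hρb
    have h2 : Real.sqrt (b/4) = sb/2 := by
      rw [show b/4 = (sb/2)^2 by rw [div_pow, hsb2]; norm_num,
        Real.sqrt_sq (by positivity)]
    rw [hsρdef]; linarith
  set e : ℂ := Complex.exp (Complex.I * θ) with hedef
  set h : ℂ := Complex.exp (Complex.I * ((θ:ℂ)/2)) with hhdef
  have habse : ‖e‖ = 1 := absIexp θ
  have habsh : ‖h‖ = 1 := by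
    rw [hhdef, show Complex.I * ((θ:ℂ)/2) = Complex.I * ((θ/2 : ℝ):ℂ) by push_cast; ring]
    exact absIexp (θ/2)
  set s : ℂ := zsqrt ξ with hsdef
  set s' : ℂ := zsqrt ((starRingEnd ℂ) ξ) with hs'def
  have habss : ‖s‖ = sb := by rw [hsdef, zsqrt_abs]
  have habss' : ‖s'‖ = sb := by rw [hs'def, zsqrt_abs, Complex.norm_conj]
  set a1 : ℝ := (e * (starRingEnd ℂ) ξ).re with ha1def
  set a2 : ℝ := (e * ξ).re with ha2def
  set a3 : ℝ := (h * (starRingEnd ℂ) s).re with ha3def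
  set a4 : ℝ := (h * (starRingEnd ℂ) s').re with ha4def
  have ha1 : |a1| ≤ b := by
    calc |a1| ≤ ‖e * (starRingEnd ℂ) ξ‖ := Complex.abs_re_le_norm _
    _ = b := by rw [norm_mul, habse, one_mul, Complex.norm_conj]
  have ha2 : |a2| ≤ b := by
    calc |a2| ≤ ‖e * ξ‖ := Complex.abs_re_le_norm _
    _ = b := by rw [norm_mul, habse, one_mul]
  have ha3 : |a3| ≤ sb := by
    calc |a3| ≤ ‖h * (starRingEnd ℂ) s‖ := Complex.abs_re_le_norm _
    _ = sb := by rw [norm_mul, habsh, one_mul, Complex.norm_conj, habss]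
  have ha4 : |a4| ≤ sb := by
    calc |a4| ≤ ‖h * (starRingEnd ℂ) s'‖ := Complex.abs_re_le_norm _
    _ = sb := by rw [norm_mul, habsh, one_mul, Complex.norm_conj, habss']
  have hZH : ∀ x : ℝ, 0 < x → ZH ((x:ℂ) * e) ξ =
      -(1/(2*Real.pi)) * ((1/2)*Real.log (x^2 - 2*a1*x + b^2)
        + (1/2)*Real.log (x^2 - 2*a2*x + b^2)
        - Real.log (x + 2*a3*Real.sqrt x + b)
        - Real.log (x - 2*a4*Real.sqrt x + b)) := by
    intro x hx
    have hzs : zsqrt ((x:ℂ) * e) = (Real.sqrt x : ℂ) * h := by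
      rw [hedef, hhdef]; exact zsqrt_polar x θ hx hθ1 hθ2
    have hxsq : Real.sqrt x * Real.sqrt x = x := Real.mul_self_sqrt hx.le
    have hre1 : ((x:ℂ) * e * (starRingEnd ℂ) ξ).re = x * a1 := by
      rw [mul_assoc, Complex.re_ofReal_mul, ha1def]
    have hre2 : ((x:ℂ) * e * (starRingEnd ℂ) ((starRingEnd ℂ) ξ)).re = x * a2 := by
      rw [Complex.conj_conj, mul_assoc, Complex.re_ofReal_mul, ha2def]
    have hre3 : ((Real.sqrt x : ℂ) * h * (starRingEnd ℂ) s).re = Real.sqrt x * a3 := by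
      rw [mul_assoc, Complex.re_ofReal_mul, ha3def]
    have hre4 : ((Real.sqrt x : ℂ) * h * (starRingEnd ℂ) s').re = Real.sqrt x * a4 := by
      rw [mul_assoc, Complex.re_ofReal_mul, ha4def]
    have hn1 : Complex.normSq ((x:ℂ)*e - ξ) = x^2 - 2*a1*x + b^2 := by
      rw [Complex.normSq_sub, hre1, Complex.normSq_mul, Complex.normSq_ofReal,
        Complex.normSq_eq_norm_sq e, Complex.normSq_eq_norm_sq ξ, habse, ← hbdef]
      ring
    have hn2 : Complex.normSq ((x:ℂ)*e - (starRingEnd ℂ) ξ) = x^2 - 2*a2*x + b^2 := by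
      rw [Complex.normSq_sub, hre2, Complex.normSq_mul, Complex.normSq_ofReal,
        Complex.normSq_conj, Complex.normSq_eq_norm_sq e, Complex.normSq_eq_norm_sq ξ, habse, ← hbdef]
      ring
    have hn3 : Complex.normSq ((Real.sqrt x : ℂ)*h + s) = x + 2*a3*Real.sqrt x + b := by
      rw [Complex.normSq_add, hre3, Complex.normSq_mul, Complex.normSq_ofReal,
        Complex.normSq_eq_norm_sq h, Complex.normSq_eq_norm_sq s, habsh, habss, hxsq, hsb2]
      ring
    have hn4 : Complex.normSq ((Real.sqrt x : ℂ)*h - s') = x - 2*a4*Real.sqrt x + b := by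
      rw [Complex.normSq_sub, hre4, Complex.normSq_mul, Complex.normSq_ofReal,
        Complex.normSq_eq_norm_sq h, Complex.normSq_eq_norm_sq s', habsh, habss', hxsq, hsb2]
      ring
    have hp1 : (0:ℝ) ≤ x^2 - 2*a1*x + b^2 := by
      have := quad_nonneg x (-a1) b hx.le (by rwa [abs_neg]); linarith
    have hp2 : (0:ℝ) ≤ x^2 - 2*a2*x + b^2 := by
      have := quad_nonneg x (-a2) b hx.le (by rwa [abs_neg]); linarith
    have hp3 : (0:ℝ) ≤ x + 2*a3*Real.sqrt x + b := by
      have h0 := quad_nonneg (Real.sqrt x) a3 sb (Real.sqrt_nonneg x) ha3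
      have hxx : Real.sqrt x ^ 2 = x := by rw [sq, hxsq]
      rw [hxx, hsb2] at h0
      linarith
    have hp4 : (0:ℝ) ≤ x - 2*a4*Real.sqrt x + b := by
      have h0 := quad_nonneg (Real.sqrt x) (-a4) sb (Real.sqrt_nonneg x) (by rwa [abs_neg])
      have hxx : Real.sqrt x ^ 2 = x := by rw [sq, hxsq]
      rw [hxx, hsb2] at h0
      linarith
    simp only [ZH]
    rw [hzs, ← hsdef, ← hs'def]
    rw [show Real.log (‖(x:ℂ)*e - ξ‖) = (1/2) * Real.log (x^2 - 2*a1*x + b^2) by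
      rw [Complex.norm_def, hn1, Real.log_sqrt hp1]; ring]
    rw [show Real.log (‖(x:ℂ)*e - (starRingEnd ℂ) ξ‖)
        = (1/2) * Real.log (x^2 - 2*a2*x + b^2) by
      rw [Complex.norm_def, hn2, Real.log_sqrt hp2]; ring]
    rw [show Real.log (‖(Real.sqrt x : ℂ)*h + s‖)
        = (1/2) * Real.log (x + 2*a3*Real.sqrt x + b) by
      rw [Complex.norm_def, hn3, Real.log_sqrt hp3]; ring]
    rw [show Real.log (‖(Real.sqrt x : ℂ)*h - s'‖)
        = (1/2) * Real.log (x - 2*a4*Real.sqrt x + b) by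
      rw [Complex.norm_def, hn4, Real.log_sqrt hp4]; ring]
    ring
  have hpos1 : b^2/4 ≤ ρ^2 - 2*a1*ρ + b^2 := by
    have := quad_lower ρ (-a1) b hρ (by linarith) (by rwa [abs_neg]) hb; linarith
  have hpos2 : b^2/4 ≤ ρ^2 - 2*a2*ρ + b^2 := by
    have := quad_lower ρ (-a2) b hρ (by linarith) (by rwa [abs_neg]) hb; linarith
  have hpos3 : b/4 ≤ ρ + 2*a3*sρ + b := by
    have h0 := quad_lower sρ a3 sb hsρ hsρb ha3 hsb
    rw [hsρ2, hsb2] at h0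
    linarith
  have hpos4 : b/4 ≤ ρ - 2*a4*sρ + b := by
    have h0 := quad_lower sρ (-a4) sb hsρ hsρb (by rwa [abs_neg]) hsb
    rw [hsρ2, hsb2] at h0
    linarith
  have hF1 : (0:ℝ) < ρ^2 - 2*a1*ρ + b^2 := lt_of_lt_of_le (by positivity) hpos1
  have hF2 : (0:ℝ) < ρ^2 - 2*a2*ρ + b^2 := lt_of_lt_of_le (by positivity) hpos2
  have hF3 : (0:ℝ) < ρ + 2*a3*sρ + b := lt_of_lt_of_le (by positivity) hpos3
  have hF4 : (0:ℝ) < ρ - 2*a4*sρ + b := lt_of_lt_of_le (by positivity) hpos4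
  have hd1 : HasDerivAt (fun x : ℝ => Real.log (x^2 - 2*a1*x + b^2))
      ((2*ρ - 2*a1)/(ρ^2 - 2*a1*ρ + b^2)) ρ := by
    have hq : HasDerivAt (fun x : ℝ => x^2 - 2*a1*x + b^2) (2*ρ - 2*a1) ρ := by
      have h1 : HasDerivAt (fun x : ℝ => x^2) (2*ρ) ρ := by simpa using hasDerivAt_pow 2 ρ
      have h2 : HasDerivAt (fun x : ℝ => 2*a1*x) (2*a1) ρ := by
        simpa using (hasDerivAt_id ρ).const_mul (2*a1)
      simpa using (h1.sub h2).add_const (b^2)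
    exact hq.log hF1.ne'
  have hd2 : HasDerivAt (fun x : ℝ => Real.log (x^2 - 2*a2*x + b^2))
      ((2*ρ - 2*a2)/(ρ^2 - 2*a2*ρ + b^2)) ρ := by
    have hq : HasDerivAt (fun x : ℝ => x^2 - 2*a2*x + b^2) (2*ρ - 2*a2) ρ := by
      have h1 : HasDerivAt (fun x : ℝ => x^2) (2*ρ) ρ := by simpa using hasDerivAt_pow 2 ρ
      have h2 : HasDerivAt (fun x : ℝ => 2*a2*x) (2*a2) ρ := by
        simpa using (hasDerivAt_id ρ).const_mul (2*a2)
      simpa using (h1.sub h2).add_const (b^2)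
    exact hq.log hF2.ne'
  have hd3 : HasDerivAt (fun x : ℝ => Real.log (x + 2*a3*Real.sqrt x + b))
      ((1 + 2*a3*(1/(2*sρ)))/(ρ + 2*a3*sρ + b)) ρ := by
    have hq : HasDerivAt (fun x : ℝ => x + 2*a3*Real.sqrt x + b) (1 + 2*a3*(1/(2*sρ))) ρ := by
      have h2 : HasDerivAt (fun x : ℝ => 2*a3*Real.sqrt x) (2*a3*(1/(2*sρ))) ρ := by
        rw [hsρdef]; exact (Real.hasDerivAt_sqrt hρ.ne').const_mul (2*a3)
      simpa using ((hasDerivAt_id ρ).add h2).add_const b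
    exact hq.log hF3.ne'
  have hd4 : HasDerivAt (fun x : ℝ => Real.log (x - 2*a4*Real.sqrt x + b))
      ((1 - 2*a4*(1/(2*sρ)))/(ρ - 2*a4*sρ + b)) ρ := by
    have hq : HasDerivAt (fun x : ℝ => x - 2*a4*Real.sqrt x + b) (1 - 2*a4*(1/(2*sρ))) ρ := by
      have h2 : HasDerivAt (fun x : ℝ => 2*a4*Real.sqrt x) (2*a4*(1/(2*sρ))) ρ := by
        rw [hsρdef]; exact (Real.hasDerivAt_sqrt hρ.ne').const_mul (2*a4)
      simpa using ((hasDerivAt_id ρ).sub h2).add_const b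
    exact hq.log hF4.ne'
  set q1 : ℝ := (2*ρ - 2*a1)/(ρ^2 - 2*a1*ρ + b^2) with hq1def
  set q2 : ℝ := (2*ρ - 2*a2)/(ρ^2 - 2*a2*ρ + b^2) with hq2def
  set q3 : ℝ := (1 + 2*a3*(1/(2*sρ)))/(ρ + 2*a3*sρ + b) with hq3def
  set q4 : ℝ := (1 - 2*a4*(1/(2*sρ)))/(ρ - 2*a4*sρ + b) with hq4def
  set D : ℝ := -(1/(2*Real.pi)) * ((1/2)*q1 + (1/2)*q2 - q3 - q4) with hDdef
  have hg : HasDerivAt (fun x : ℝ => -(1/(2*Real.pi)) * ((1/2)*Real.log (x^2 - 2*a1*x + b^2)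
        + (1/2)*Real.log (x^2 - 2*a2*x + b^2)
        - Real.log (x + 2*a3*Real.sqrt x + b)
        - Real.log (x - 2*a4*Real.sqrt x + b))) D ρ := by
    rw [hDdef, hq1def, hq2def, hq3def, hq4def]
    exact ((((hd1.const_mul (1/2)).add (hd2.const_mul (1/2))).sub hd3).sub hd4).const_mul
      (-(1/(2*Real.pi)))
  have hev : (fun ρ' : ℝ => ZH ((ρ' : ℂ) * e) ξ) =ᶠ[nhds ρ]
      (fun x : ℝ => -(1/(2*Real.pi)) * ((1/2)*Real.log (x^2 - 2*a1*x + b^2)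
        + (1/2)*Real.log (x^2 - 2*a2*x + b^2)
        - Real.log (x + 2*a3*Real.sqrt x + b)
        - Real.log (x - 2*a4*Real.sqrt x + b))) := by
    filter_upwards [eventually_gt_nhds hρ] with x hx
    exact hZH x hx
  refine ⟨D, hg.congr_of_eventuallyEq hev, ?_⟩
  have hq1b : |q1| ≤ (8+8*b)/b^2 :=
    quot_bound1 ρ a1 b (ρ^2 - 2*a1*ρ + b^2) hρ hρ1 ha1 hb hpos1
  have hq2b : |q2| ≤ (8+8*b)/b^2 :=
    quot_bound1 ρ a2 b (ρ^2 - 2*a2*ρ + b^2) hρ hρ1 ha2 hb hpos2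
  have hq3b : |q3| ≤ ((4+4*sb)/b)/sρ := by
    have h0 := quot_bound2 sρ sb a3 (ρ + 2*a3*sρ + b) hsρ hsρ1 ha3 hsb
      (by rw [hsb2]; exact hpos3)
    rw [hsb2] at h0
    exact h0
  have hq4b : |q4| ≤ ((4+4*sb)/b)/sρ := by
    have h0 := quot_bound2 sρ sb (-a4) (ρ - 2*a4*sρ + b) hsρ hsρ1 (by rwa [abs_neg]) hsb
      (by rw [hsb2]; exact hpos4)
    rw [hsb2, show (1 + 2*(-a4)*(1/(2*sρ))) = 1 - 2*a4*(1/(2*sρ)) by ring] at h0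
    exact h0
  have hSb : |(1/2)*q1 + (1/2)*q2 - q3 - q4| ≤ (8+8*b)/b^2 + 2*(((4+4*sb)/b)/sρ) := by
    obtain ⟨h1l, h1u⟩ := abs_le.mp hq1b
    obtain ⟨h2l, h2u⟩ := abs_le.mp hq2b
    obtain ⟨h3l, h3u⟩ := abs_le.mp hq3b
    obtain ⟨h4l, h4u⟩ := abs_le.mp hq4b
    rw [abs_le]; constructor <;> linarith
  have hDabs : |D| = (1/(2*Real.pi)) * |(1/2)*q1 + (1/2)*q2 - q3 - q4| := by
    rw [hDdef, abs_mul, abs_neg, _root_.abs_of_pos (by positivity : (0:ℝ) < 1/(2*Real.pi))]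
  have hrpow : ρ ^ (-(1/2) : ℝ) = 1/sρ := by
    rw [Real.rpow_neg hρ.le, hsρdef, Real.sqrt_eq_rpow]
    exact (one_div _).symm
  rw [hrpow]
  have step : (8+8*b)/b^2 + 2*(((4+4*sb)/b)/sρ) ≤ ((8+8*b)/b^2 + 2*((4+4*sb)/b))/sρ := by
    have h1 : (8+8*b)/b^2 ≤ ((8+8*b)/b^2)/sρ := le_div_self (by positivity) hsρ hsρ1
    have h2 : ((8+8*b)/b^2)/sρ + 2*(((4+4*sb)/b)/sρ) = ((8+8*b)/b^2 + 2*((4+4*sb)/b))/sρ := by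
      field_simp
    linarith
  calc |D| = (1/(2*Real.pi)) * |(1/2)*q1 + (1/2)*q2 - q3 - q4| := hDabs
  _ ≤ (1/(2*Real.pi)) * ((8+8*b)/b^2 + 2*(((4+4*sb)/b)/sρ)) :=
    mul_le_mul_of_nonneg_left hSb (by positivity)
  _ ≤ (1/(2*Real.pi)) * (((8+8*b)/b^2 + 2*((4+4*sb)/b))/sρ) :=
    mul_le_mul_of_nonneg_left step (by positivity)
  _ = (1/(2*Real.pi)) * ((8+8*b)/b^2 + 2*((4+4*sb)/b)) * (1/sρ) := by ring
end
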